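/- Let Ω ⊆ ℝ^N have finite positive measure and let (p_n) be a sequence of measurable exponents p_n: Ω → (1,∞) with p_n⁻ := ess inf p_n → +∞ and p_n⁺ ≤ β p_n⁻ for a fixed β > 1. Then for every u ∈ L^∞(Ω), the Luxemburg norms converge: lim_{n→∞} ‖u‖_{p_n(·)} = ‖u‖_∞. -/

import Mathlib

open MeasureTheory Filter
open scoped ENNReal NNReal

/-- The Luxemburg norm of `u` for a variable exponent `p` with respect to a measure `μ`. -/
noncomputable def luxNorm {α : Type*} [MeasurableSpace α] (μ : Measure α) (p : α → ℝ)
    (u : α → ℝ) : ℝ :=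
  sInf {l : ℝ | 0 < l ∧ ∫ x, (|u x| / l) ^ p x ∂μ ≤ 1}

/-- if `p_n⁻ → ∞` and `p_n⁺ ≤ β p_n⁻`, then for every `u ∈ L^∞(Ω)` the
Luxemburg norms converge to the essential supremum norm: `‖u‖_{p_n(·)} → ‖u‖_∞`. -/
theorem stmt4 {N : ℕ} (Ω : Set (Fin N → ℝ)) (hΩm : MeasurableSet Ω)
    (hΩpos : 0 < volume Ω) (hΩfin : volume Ω < ⊤)
    (p : ℕ → (Fin N → ℝ) → ℝ) (hpmeas : ∀ n, Measurable (p n))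
    (hp1 : ∀ n, ∀ᵐ x ∂(volume.restrict Ω), 1 < p n x)
    (hpB : ∀ n, ∃ B : ℝ, ∀ᵐ x ∂(volume.restrict Ω), p n x ≤ B)
    (β : ℝ) (hβ : 1 < β)
    (hpβ : ∀ n, essSup (p n) (volume.restrict Ω) ≤ β * essInf (p n) (volume.restrict Ω))
    (hdiv : Tendsto (fun n => essInf (p n) (volume.restrict Ω)) atTop atTop)
    (u : (Fin N → ℝ) → ℝ) (hu : Measurable u)
    (huB : MemLp u ⊤ (volume.restrict Ω)) :
    Tendsto (fun n => luxNorm (volume.restrict Ω) (p n) u) atTop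
      (nhds (essSup (fun x => |u x|) (volume.restrict Ω))) := by
  set μ := volume.restrict Ω with hμdef
  haveI : IsFiniteMeasure μ := ⟨by rwa [Measure.restrict_apply_univ]⟩
  have hμne : μ ≠ 0 := by
    intro h
    have h2 : μ Set.univ = 0 := by rw [h]; rfl
    rw [Measure.restrict_apply_univ] at h2
    exact absurd h2 hΩpos.ne'
  haveI : (ae μ).NeBot := ae_neBot.mpr hμne
  set M := essSup (fun x => |u x|) μ with hMdef
  -- a.e. bound on |u|
  obtain ⟨C, hC⟩ : ∃ C : ℝ, ∀ᵐ x ∂μ, |u x| ≤ C := by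
    have h1 : eLpNormEssSup u μ < ⊤ := by
      have := huB.2; rwa [eLpNorm_exponent_top] at this
    refine ⟨(eLpNormEssSup u μ).toReal, ?_⟩
    filter_upwards [ae_le_eLpNormEssSup (f := u) (μ := μ)] with x hx
    have h2 : ((‖u x‖₊ : ℝ≥0∞)).toReal ≤ (eLpNormEssSup u μ).toReal :=
      ENNReal.toReal_mono h1.ne hx
    simpa [Real.norm_eq_abs] using h2
  have hubdd : IsBoundedUnder (· ≤ ·) (ae μ) fun x => |u x| :=
    ⟨C, by rw [eventually_map]; exact hC⟩
  have huM : ∀ᵐ x ∂μ, |u x| ≤ M := ae_le_essSup hubdd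
  have hM0 : 0 ≤ M := by
    obtain ⟨x, hx⟩ := huM.exists
    exact le_trans (abs_nonneg _) hx
  set q : ℕ → ℝ := fun n => essInf (p n) μ with hqdef
  have hqle : ∀ n, ∀ᵐ x ∂μ, q n ≤ p n x := fun n =>
    ae_essInf_le ⟨1, by rw [eventually_map]; exact (hp1 n).mono fun x h => le_of_lt h⟩
  set T : ℝ := (μ Set.univ).toReal with hTdef
  have hT0 : 0 ≤ T := ENNReal.toReal_nonneg
  -- integrability of the modular integrand
  have hint : ∀ n, ∀ l : ℝ, 0 < l → Integrable (fun x => (|u x| / l) ^ p n x) μ := by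
    intro n l hl
    obtain ⟨B, hB⟩ := hpB n
    refine Integrable.mono' (integrable_const (max 1 ((max C 1 / l) ^ max B 1)))
      ((hu.abs.div_const l).pow (hpmeas n)).aestronglyMeasurable ?_
    filter_upwards [hC, hB, hp1 n] with x hxC hxB hx1
    have ht0 : 0 ≤ |u x| / l := div_nonneg (abs_nonneg _) hl.le
    rw [Real.norm_of_nonneg (Real.rpow_nonneg ht0 _)]
    rcases le_or_gt (|u x| / l) 1 with h | h
    · exact le_max_of_le_left (Real.rpow_le_one ht0 h (by linarith))
    · refine le_max_of_le_right ?_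
      calc (|u x| / l) ^ p n x ≤ (|u x| / l) ^ max B 1 :=
            Real.rpow_le_rpow_of_exponent_le h.le (le_trans hxB (le_max_left _ _))
        _ ≤ (max C 1 / l) ^ max B 1 := by
            refine Real.rpow_le_rpow ht0 ?_ (le_trans zero_le_one (le_max_right _ _))
            gcongr
            exact le_trans hxC (le_max_left _ _)
  -- the defining set is nonempty
  have hSne : ∀ n, ((M + 1) * (T + 1)) ∈
      {l : ℝ | 0 < l ∧ ∫ x, (|u x| / l) ^ p n x ∂μ ≤ 1} := by
    intro n
    have hl₀ : 0 < (M + 1) * (T + 1) := mul_pos (by linarith) (by linarith)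
    set l₀ : ℝ := (M + 1) * (T + 1) with hl₀def
    refine ⟨hl₀, ?_⟩
    have hbound : ∀ᵐ x ∂μ, (|u x| / l₀) ^ p n x ≤ M / l₀ := by
      filter_upwards [huM, hp1 n] with x hxM hx1
      have ht0 : 0 ≤ |u x| / l₀ := div_nonneg (abs_nonneg _) hl₀.le
      have htl : |u x| / l₀ ≤ M / l₀ := by gcongr
      have ht1 : |u x| / l₀ ≤ 1 := by
        refine htl.trans ?_
        rw [div_le_one hl₀]
        nlinarith
      rcases eq_or_lt_of_le ht0 with h0 | h0
      · rw [← h0, Real.zero_rpow (by linarith)]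
        exact div_nonneg hM0 hl₀.le
      · calc (|u x| / l₀) ^ p n x ≤ (|u x| / l₀) ^ (1 : ℝ) :=
              Real.rpow_le_rpow_of_exponent_ge h0 ht1 hx1.le
          _ = |u x| / l₀ := Real.rpow_one _
          _ ≤ M / l₀ := htl
    have hmono := integral_mono_ae (hint n l₀ hl₀) (integrable_const _) hbound
    calc ∫ x, (|u x| / l₀) ^ p n x ∂μ ≤ ∫ _, M / l₀ ∂μ := hmono
      _ = T * (M / l₀) := by rw [integral_const]; rw [smul_eq_mul]; rfl
      _ ≤ 1 := by
          rw [← mul_div_assoc, div_le_one hl₀, hl₀def]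
          nlinarith
  have hbdd : ∀ n, BddBelow {l : ℝ | 0 < l ∧ ∫ x, (|u x| / l) ^ p n x ∂μ ≤ 1} :=
    fun n => ⟨0, fun l hl => hl.1.le⟩
  have hlux0 : ∀ n, 0 ≤ luxNorm μ (p n) u :=
    fun n => Real.sInf_nonneg fun l hl => hl.1.le
  rw [tendsto_order]
  constructor
  · -- lower bound
    intro a ha
    rcases lt_or_ge a 0 with ha0 | ha0
    · exact Eventually.of_forall fun n => lt_of_lt_of_le ha0 (hlux0 n)
    · set b : ℝ := a + (M - a) / 3 with hbdef
      set b' : ℝ := a + 2 * (M - a) / 3 with hb'def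
      have hab : a < b := by rw [hbdef]; linarith
      have hbb' : b < b' := by rw [hbdef, hb'def]; linarith
      have hb'M : b' < M := by rw [hb'def]; linarith
      have hb0 : 0 < b := lt_of_le_of_lt ha0 hab
      have hb'0 : 0 < b' := lt_trans hb0 hbb'
      set A : Set (Fin N → ℝ) := {x | b' < |u x|} with hAdef
      have hAmeas : MeasurableSet A := measurableSet_lt measurable_const hu.abs
      have hA0 : 0 < μ A := by
        rw [pos_iff_ne_zero]
        intro hA
        have hae : ∀ᵐ x ∂μ, |u x| ≤ b' := by
          rw [ae_iff]
          simpa [hAdef, not_le] using hA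
        have hlbdd : IsBoundedUnder (· ≥ ·) (ae μ) fun x => |u x| :=
          ⟨0, by rw [eventually_map]; exact Eventually.of_forall fun x => abs_nonneg _⟩
        have hMb' : M ≤ b' :=
          limsup_le_of_le hlbdd.isCoboundedUnder_le hae
        linarith
      have hTA : 0 < (μ A).toReal :=
        ENNReal.toReal_pos hA0.ne' (measure_lt_top μ A).ne
      set r : ℝ := b' / b with hrdef
      have hr : 1 < r := (one_lt_div hb0).mpr hbb'
      have hrpow : Tendsto (fun n => r ^ q n) atTop atTop := by
        have hlog : 0 < Real.log r := Real.log_pos hr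
        have h := Real.tendsto_exp_atTop.comp (hdiv.atTop_mul_const hlog)
        refine h.congr fun n => ?_
        simp only [Function.comp]
        rw [Real.rpow_def_of_pos (by linarith), mul_comm]
      have h1 : Tendsto (fun n => (μ A).toReal * r ^ q n) atTop atTop :=
        hrpow.const_mul_atTop hTA
      filter_upwards [h1.eventually_gt_atTop 1, hdiv.eventually_ge_atTop 0] with n hn1 hn0
      have hn0' : (0 : ℝ) ≤ q n := hn0
      have hble : b ≤ luxNorm μ (p n) u := by
        refine le_csInf ⟨_, hSne n⟩ ?_
        intro l hl
        by_contra hlb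
        push_neg at hlb
        obtain ⟨hl0, hlint⟩ := hl
        have key : (μ A).toReal * r ^ q n ≤ ∫ x, (|u x| / l) ^ p n x ∂μ := by
          have hresA : ∀ᵐ x ∂μ.restrict A, r ^ q n ≤ (|u x| / l) ^ p n x := by
            filter_upwards [ae_restrict_of_ae (hqle n), ae_restrict_mem hAmeas] with x hqx hxA
            have hxA' : b' < |u x| := hxA
            have hru : r ≤ |u x| / l :=
              div_le_div₀ (abs_nonneg _) hxA'.le hl0 hlb.le
            calc r ^ q n ≤ r ^ p n x :=
                  Real.rpow_le_rpow_of_exponent_le hr.le hqx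
              _ ≤ (|u x| / l) ^ p n x :=
                  Real.rpow_le_rpow (by linarith) hru (le_trans hn0' hqx)
          calc (μ A).toReal * r ^ q n = ∫ _ in A, r ^ q n ∂μ := by
                rw [setIntegral_const, smul_eq_mul]; rfl
            _ ≤ ∫ x in A, (|u x| / l) ^ p n x ∂μ :=
                integral_mono_ae (integrable_const _) ((hint n l hl0).restrict) hresA
            _ ≤ ∫ x, (|u x| / l) ^ p n x ∂μ :=
                setIntegral_le_integral (hint n l hl0)
                  (Eventually.of_forall fun x =>
                    Real.rpow_nonneg (div_nonneg (abs_nonneg _) hl0.le) _)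
        linarith
      linarith
  · -- upper bound
    intro a ha
    set l : ℝ := (M + a) / 2 with hldef
    have hMl : M < l := by rw [hldef]; linarith
    have hla : l < a := by rw [hldef]; linarith
    have hl0 : 0 < l := lt_of_le_of_lt hM0 hMl
    set r' : ℝ := (M / l + 1) / 2 with hr'def
    have hMl1 : M / l < 1 := (div_lt_one hl0).mpr hMl
    have hMl0 : 0 ≤ M / l := div_nonneg hM0 hl0.le
    have hr'0 : 0 < r' := by rw [hr'def]; linarith
    have hr'1 : r' < 1 := by rw [hr'def]; linarith
    have hMr' : M / l ≤ r' := by rw [hr'def]; linarith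
    have hconv : Tendsto (fun n => T * r' ^ q n) atTop (nhds 0) := by
      have h := (tendsto_rpow_atTop_of_base_lt_one r' (by linarith) hr'1).comp hdiv
      have h2 := h.const_mul T
      simpa using h2
    filter_upwards [hconv.eventually_lt_const one_pos] with n hn
    have hluxle : luxNorm μ (p n) u ≤ l := by
      refine csInf_le (hbdd n) ⟨hl0, ?_⟩
      have hbound : ∀ᵐ x ∂μ, (|u x| / l) ^ p n x ≤ r' ^ q n := by
        filter_upwards [huM, hqle n, hp1 n] with x hxM hqx hx1
        have ht0 : 0 ≤ |u x| / l := div_nonneg (abs_nonneg _) hl0.le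
        have htr : |u x| / l ≤ r' := le_trans (by gcongr) hMr'
        calc (|u x| / l) ^ p n x ≤ r' ^ p n x :=
              Real.rpow_le_rpow ht0 htr (by linarith)
          _ ≤ r' ^ q n :=
              Real.rpow_le_rpow_of_exponent_ge hr'0 hr'1.le hqx
      have hmono := integral_mono_ae (hint n l hl0) (integrable_const _) hbound
      calc ∫ x, (|u x| / l) ^ p n x ∂μ ≤ ∫ _, r' ^ q n ∂μ := hmono
        _ = T * r' ^ q n := by rw [integral_const, smul_eq_mul]; rfl
        _ ≤ 1 := hn.le
    exact lt_of_le_of_lt hluxle hla
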